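/- Let Θ be a 2-local automorphism of B(H) whose restriction to the ideal of finite-rank operators is the identity (Θ(x) = x for all finite-rank x). Then Θ is the identity on all of B(H). -/

import Mathlib

noncomputable section

variable {H : Type*} [NormedAddCommGroup H] [InnerProductSpace ℂ H] [CompleteSpace H]

/-- A bounded operator has finite rank if its range is finite-dimensional. -/
def FiniteRank (x : H →L[ℂ] H) : Prop :=
  FiniteDimensional ℂ (LinearMap.range (x : H →ₗ[ℂ] H))

/-- A 2-local automorphism: at every pair of points it agrees with some
algebra automorphism of `B(H)`. -/
def Is2LocalAutomorphism (Θ : (H →L[ℂ] H) → (H →L[ℂ] H)) : Prop :=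
  ∀ x y : H →L[ℂ] H, ∃ Ψ : (H →L[ℂ] H) ≃ₐ[ℂ] (H →L[ℂ] H), Θ x = Ψ x ∧ Θ y = Ψ y

/-- The canonical trace, computed along a Hilbert basis. -/
def traceAlong {ι : Type*} (β : HilbertBasis ι ℂ H) (x : H →L[ℂ] H) : ℂ :=
  ∑' i, (inner ℂ (β i) (x (β i)) : ℂ)

theorem twoLocalAutomorphism_eq_id_of_fixes_finiteRank
    (Θ : (H →L[ℂ] H) → (H →L[ℂ] H)) (hΘ : Is2LocalAutomorphism Θ)
    (h : ∀ x : H →L[ℂ] H, FiniteRank x → Θ x = x) : ∀ x : H →L[ℂ] H, Θ x = x := by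
  intro x
  ext ξ
  refine ext_inner_left ℂ fun η => ?_
  by_cases hξ : ξ = 0
  · simp [hξ]
  by_cases hη : η = 0
  · simp [hη]
  -- the rank-one operator v ↦ ⟪η, v⟫ • ξ
  set f : H →L[ℂ] H := (innerSL ℂ η).smulRight ξ with hfdef
  have hfapp : ∀ v, f v = (inner ℂ η v : ℂ) • ξ := fun v => rfl
  have hfr : FiniteRank f := by
    unfold FiniteRank
    have hle : LinearMap.range (f : H →ₗ[ℂ] H) ≤ ℂ ∙ ξ := by
      rintro _ ⟨v, rfl⟩
      exact Submodule.smul_mem _ _ (Submodule.mem_span_singleton_self ξ)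
    have : FiniteDimensional ℂ (ℂ ∙ ξ : Submodule ℂ H) := inferInstance
    exact Submodule.finiteDimensional_of_le hle
  -- sandwich identity
  have haux : ∀ T : H →L[ℂ] H, f * T * f = (inner ℂ η (T ξ) : ℂ) • f := by
    intro T
    ext v
    simp only [ContinuousLinearMap.mul_apply, ContinuousLinearMap.smul_apply, hfapp,
      map_smul, inner_smul_right, smul_smul]
    ring_nf
  obtain ⟨Ψ, hx, hfΨ⟩ := hΘ x f
  have hΨf : Ψ f = f := by rw [← hfΨ, h f hfr]
  have key : (inner ℂ η (Θ x ξ) : ℂ) • f = (inner ℂ η (x ξ) : ℂ) • f := by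
    calc (inner ℂ η (Θ x ξ) : ℂ) • f = f * Θ x * f := (haux (Θ x)).symm
      _ = Ψ f * Ψ x * Ψ f := by rw [hΨf, hx]
      _ = Ψ (f * x * f) := by rw [map_mul, map_mul]
      _ = Ψ ((inner ℂ η (x ξ) : ℂ) • f) := by rw [haux]
      _ = (inner ℂ η (x ξ) : ℂ) • f := by rw [map_smul, hΨf]
  have hfne : f ≠ 0 := by
    intro h0
    have := hfapp η
    rw [h0] at this
    simp only [ContinuousLinearMap.zero_apply] at this
    rcases smul_eq_zero.mp this.symm with hc | hc
    · exact hη (inner_self_eq_zero.mp hc)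
    · exact hξ hc
  exact smul_left_injective ℂ hfne key
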